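/- Let A, B be d×d complex matrices with equal diagonals. Then the following six statements are equivalent: (i) (A,B) is PCP; (ii) (A,Bᵀ) is PCP; (iii) (A,B,B) is TCP; (iv) (A,B,Bᵀ) is TCP; (v) (A,Bᵀ,B) is TCP; (vi) (A,Bᵀ,Bᵀ) is TCP. -/

import Mathlib

open Matrix

/-- Pairwise complete positivity of a pair `(A,B)`. -/
def PCP {d : ℕ} (A B : Matrix (Fin d) (Fin d) ℂ) : Prop :=
  ∃ (d' : ℕ) (V W : Matrix (Fin d) (Fin d') ℂ),
    A = (V ⊙ V.map star) * (W ⊙ W.map star)ᴴ ∧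
    B = (V ⊙ W) * (V ⊙ W)ᴴ

/-- Triplewise complete positivity of a triple `(A,B,C)`. -/
def TCP {d : ℕ} (A B C : Matrix (Fin d) (Fin d) ℂ) : Prop :=
  ∃ (d' : ℕ) (V W : Matrix (Fin d) (Fin d') ℂ),
    A = (V ⊙ V.map star) * (W ⊙ W.map star)ᴴ ∧
    B = (V ⊙ W) * (V ⊙ W)ᴴ ∧
    C = (V ⊙ W.map star) * (V ⊙ W.map star)ᴴ

namespace Stmt3Aux

noncomputable def phase (z : ℂ) : ℂ := if z = 0 then 1 else z / (‖z‖ : ℂ)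

lemma phase_mul_abs (z : ℂ) : phase z * (‖z‖ : ℂ) = z := by
  unfold phase
  split_ifs with h
  · simp [h]
  · have : (‖z‖ : ℂ) ≠ 0 := by
      simpa using (norm_ne_zero_iff.mpr h)
    field_simp

lemma phase_mul_star_phase (z : ℂ) : phase z * star (phase z) = 1 := by
  unfold phase
  split_ifs with h
  · simp
  · have h1 : (‖z‖ : ℂ) ≠ 0 := by
      simpa using (norm_ne_zero_iff.mpr h)
    have h2 : (‖z‖ : ℂ) ^ 2 ≠ 0 := pow_ne_zero _ h1
    rw [Complex.star_def, map_div₀, Complex.conj_ofReal, div_mul_div_comm,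
      Complex.mul_conj, Complex.normSq_eq_norm_sq, ← Complex.ofReal_mul, ← sq,
      Complex.ofReal_pow, div_self h2]

lemma abs_mul_abs (z : ℂ) :
    ((‖z‖ * ‖z‖ : ℝ) : ℂ) = z * (starRingEnd ℂ) z := by
  have h : ‖z‖ * ‖z‖ = Complex.normSq z := by
    rw [← Complex.sq_norm, sq]
  rw [h]
  exact (Complex.mul_conj z).symm

/-- conjugating the matrix transposes the Gram matrix -/
lemma conj_gram {d d' : ℕ} (M : Matrix (Fin d) (Fin d') ℂ) :
    (M.map star) * (M.map star)ᴴ = (M * Mᴴ)ᵀ := by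
  ext i k
  simp only [mul_apply, conjTranspose_apply, transpose_apply, map_apply, star_star]
  exact Finset.sum_congr rfl fun j _ => by rw [mul_comm]

lemma pcp_conj {d : ℕ} {A B : Matrix (Fin d) (Fin d) ℂ} (h : PCP A B) : PCP A Bᵀ := by
  obtain ⟨d', V, W, hA, hB⟩ := h
  refine ⟨d', V.map star, W.map star, ?_, ?_⟩
  · have hV : (V.map star) ⊙ (V.map star).map star = V ⊙ V.map star := by
      ext i j; simp [hadamard_apply, map_apply, mul_comm]
    have hW : (W.map star) ⊙ (W.map star).map star = W ⊙ W.map star := by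
      ext i j; simp [hadamard_apply, map_apply, mul_comm]
    rw [hV, hW, hA]
  · have hM : (V.map star) ⊙ (W.map star) = (V ⊙ W).map star := by
      ext i j; simp [hadamard_apply, map_apply]
    rw [hM, conj_gram, hB]

lemma pcp_tcp₁ {d : ℕ} {A B : Matrix (Fin d) (Fin d) ℂ} (h : PCP A B) : TCP A B B := by
  obtain ⟨d', V, W, hA, hB⟩ := h
  set V' : Matrix (Fin d) (Fin d') ℂ := fun i j => V i j * phase (W i j) with hV'
  set W' : Matrix (Fin d) (Fin d') ℂ := fun i j => (‖W i j‖ : ℂ) with hW'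
  have e1 : V' ⊙ V'.map star = V ⊙ V.map star := by
    ext i j
    simp only [hadamard, Matrix.map, of_apply, hadamard_apply, map_apply, hV', star_mul']
    linear_combination V i j * star (V i j) * phase_mul_star_phase (W i j)
  have e2 : W' ⊙ W'.map star = W ⊙ W.map star := by
    ext i j
    simp only [hadamard, Matrix.map, of_apply, hadamard_apply, map_apply, hW', Complex.star_def, Complex.conj_ofReal]
    rw [← Complex.ofReal_mul]
    exact abs_mul_abs _
  have e3 : V' ⊙ W' = V ⊙ W := by
    ext i j
    simp only [hadamard, Matrix.map, of_apply, hadamard_apply, hV', hW']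
    linear_combination V i j * phase_mul_abs (W i j)
  have e4 : V' ⊙ W'.map star = V ⊙ W := by
    ext i j
    simp only [hadamard, Matrix.map, of_apply, hadamard_apply, map_apply, hV', hW', Complex.star_def, Complex.conj_ofReal]
    linear_combination V i j * phase_mul_abs (W i j)
  exact ⟨d', V', W', by rw [e1, e2, hA], by rw [e3, hB], by rw [e4, hB]⟩

lemma pcp_tcp₂ {d : ℕ} {A B : Matrix (Fin d) (Fin d) ℂ} (h : PCP A B) : TCP A B Bᵀ := by
  obtain ⟨d', V, W, hA, hB⟩ := h
  set V' : Matrix (Fin d) (Fin d') ℂ := fun i j => (‖V i j‖ : ℂ) with hV'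
  set W' : Matrix (Fin d) (Fin d') ℂ := fun i j => W i j * phase (V i j) with hW'
  have habs : ∀ i j, (‖V i j‖ : ℂ) * star (phase (V i j)) = star (V i j) := by
    intro i j
    have h := congrArg star (phase_mul_abs (V i j))
    have hs : star ((‖V i j‖ : ℝ) : ℂ) = ((‖V i j‖ : ℝ) : ℂ) := by
      simp [Complex.star_def, Complex.conj_ofReal]
    rw [star_mul', hs] at h
    linear_combination h
  have e1 : V' ⊙ V'.map star = V ⊙ V.map star := by
    ext i j
    simp only [hadamard, Matrix.map, of_apply, hadamard_apply, map_apply, hV', Complex.star_def, Complex.conj_ofReal]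
    rw [← Complex.ofReal_mul]
    exact abs_mul_abs _
  have e2 : W' ⊙ W'.map star = W ⊙ W.map star := by
    ext i j
    simp only [hadamard, Matrix.map, of_apply, hadamard_apply, map_apply, hW', star_mul']
    linear_combination W i j * star (W i j) * phase_mul_star_phase (V i j)
  have e3 : V' ⊙ W' = V ⊙ W := by
    ext i j
    simp only [hadamard, Matrix.map, of_apply, hadamard_apply, hV', hW']
    linear_combination W i j * phase_mul_abs (V i j)
  have e4 : V' ⊙ W'.map star = (V ⊙ W).map star := by
    ext i j
    simp only [hadamard, Matrix.map, of_apply, hadamard_apply, map_apply, hV', hW', star_mul']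
    linear_combination star (W i j) * habs i j
  refine ⟨d', V', W', by rw [e1, e2, hA], by rw [e3, hB], ?_⟩
  rw [e4, conj_gram, hB]

end Stmt3Aux

open Stmt3Aux in
theorem stmt3 {d : ℕ} (A B : Matrix (Fin d) (Fin d) ℂ)
    (hdiag : ∀ i, A i i = B i i) :
    [PCP A B, PCP A Bᵀ, TCP A B B, TCP A B Bᵀ, TCP A Bᵀ B, TCP A Bᵀ Bᵀ].TFAE := by
  tfae_have 1 → 2 := fun h => pcp_conj h
  tfae_have 2 → 1 := fun h => by simpa using pcp_conj h
  tfae_have 1 → 3 := fun h => pcp_tcp₁ h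
  tfae_have 3 → 1 := fun ⟨d', V, W, h1, h2, _⟩ => ⟨d', V, W, h1, h2⟩
  tfae_have 1 → 4 := fun h => pcp_tcp₂ h
  tfae_have 4 → 1 := fun ⟨d', V, W, h1, h2, _⟩ => ⟨d', V, W, h1, h2⟩
  tfae_have 2 → 5 := fun h => by simpa using pcp_tcp₂ h
  tfae_have 5 → 2 := fun ⟨d', V, W, h1, h2, _⟩ => ⟨d', V, W, h1, h2⟩
  tfae_have 2 → 6 := fun h => pcp_tcp₁ h
  tfae_have 6 → 2 := fun ⟨d', V, W, h1, h2, _⟩ => ⟨d', V, W, h1, h2⟩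
  tfae_finish
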